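/- Let φ⁻ : ℚ[u, v, w] → ℚ[a, b] be the ℚ-algebra homomorphism determined by u ↦ a, v ↦ b², w ↦ (a+b)², and φ⁺ : ℚ[u, v, w] → ℚ[a, b] the one determined by u ↦ a², v ↦ b, w ↦ (a+b)². Then the sum of the ranges of φ⁻ and φ⁺, taken as ℚ-linear subspaces of ℚ[a, b], is all of ℚ[a, b]: every polynomial in ℚ[a, b] can be written as p⁻ + p⁺ with p⁻ in the range of φ⁻ and p⁺ in the range of φ⁺. -/

import Mathlib

open MvPolynomial

/-- The ℚ-algebra homomorphism `φ⁻ : ℚ[u, v, w] → ℚ[a, b]` determined by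
`u ↦ a`, `v ↦ b²`, `w ↦ (a+b)²`, where `a = X 0` and `b = X 1`. -/
noncomputable def phiMinus : MvPolynomial (Fin 3) ℚ →ₐ[ℚ] MvPolynomial (Fin 2) ℚ :=
  aeval ![X 0, (X 1) ^ 2, (X 0 + X 1) ^ 2]

/-- The ℚ-algebra homomorphism `φ⁺ : ℚ[u, v, w] → ℚ[a, b]` determined by
`u ↦ a²`, `v ↦ b`, `w ↦ (a+b)²`, where `a = X 0` and `b = X 1`. -/
noncomputable def phiPlus : MvPolynomial (Fin 3) ℚ →ₐ[ℚ] MvPolynomial (Fin 2) ℚ :=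
  aeval ![(X 0) ^ 2, X 1, (X 0 + X 1) ^ 2]

lemma monomial_fin2 (m : Fin 2 →₀ ℕ) (c : ℚ) :
    (monomial m c : MvPolynomial (Fin 2) ℚ) = C c * X 0 ^ m 0 * X 1 ^ m 1 := by
  rw [monomial_eq, Finsupp.prod_fintype _ _ (fun i => pow_zero _), Fin.prod_univ_two, mul_assoc]

/-- The sum of the ranges of `φ⁻` and `φ⁺`, as ℚ-linear subspaces of `ℚ[a, b]`,
is all of `ℚ[a, b]`: every polynomial is `p⁻ + p⁺` with `p⁻ ∈ range φ⁻` and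
`p⁺ ∈ range φ⁺`. -/
theorem range_phiMinus_add_range_phiPlus_eq_top :
    ∀ h : MvPolynomial (Fin 2) ℚ,
      ∃ p q : MvPolynomial (Fin 2) ℚ,
        p ∈ Set.range phiMinus ∧ q ∈ Set.range phiPlus ∧ h = p + q := by
  intro h
  induction h using MvPolynomial.induction_on' with
  | add f g hf hg =>
    obtain ⟨p, q, ⟨x, hx⟩, ⟨y, hy⟩, rfl⟩ := hf
    obtain ⟨p', q', ⟨x', hx'⟩, ⟨y', hy'⟩, rfl⟩ := hg
    exact ⟨p + p', q + q', ⟨x + x', by simp [map_add, hx, hx']⟩,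
      ⟨y + y', by simp [map_add, hy, hy']⟩, by ring⟩
  | monomial m c =>
    rcases Nat.even_or_odd (m 1) with ⟨k, hk⟩ | ⟨k, hk⟩
    · refine ⟨monomial m c, 0, ⟨C c * X 0 ^ m 0 * X 1 ^ k, ?_⟩, ⟨0, map_zero _⟩, by ring⟩
      simp only [phiMinus, map_mul, map_pow, aeval_X, aeval_C, Matrix.cons_val_zero,
        Matrix.cons_val_one, Matrix.head_cons, algebraMap_eq]
      rw [monomial_fin2, hk]; ring
    · rcases Nat.eq_zero_or_pos (m 0) with h0 | h0
      · refine ⟨0, monomial m c, ⟨0, map_zero _⟩, ⟨C c * X 1 ^ m 1, ?_⟩, by ring⟩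
        simp only [phiPlus, map_mul, map_pow, aeval_X, aeval_C, Matrix.cons_val_zero,
          Matrix.cons_val_one, Matrix.head_cons, algebraMap_eq]
        rw [monomial_fin2, h0]; ring
      · obtain ⟨i, hi⟩ : ∃ i, m 0 = i + 1 := ⟨m 0 - 1, (Nat.succ_pred_eq_of_pos h0).symm⟩
        refine ⟨monomial m c, 0,
          ⟨C c * X 0 ^ i * X 1 ^ k * (C (1/2 : ℚ) * (X 2 - X 0 ^ 2 - X 1)), ?_⟩,
          ⟨0, map_zero _⟩, by ring⟩
        simp only [phiMinus, map_mul, map_pow, map_sub, aeval_X, aeval_C, Matrix.cons_val_zero,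
          Matrix.cons_val_one, Matrix.head_cons, Matrix.cons_val_two, Matrix.tail_cons,
          algebraMap_eq]
        rw [monomial_fin2, hi, hk]
        have h2 : (C (1/2 : ℚ)) * (2 : MvPolynomial (Fin 2) ℚ) = 1 := by
          rw [← map_ofNat (C : ℚ →+* MvPolynomial (Fin 2) ℚ) 2, ← C_mul]; norm_num
        linear_combination (C c * X 0 ^ (i+1) * X 1 ^ (2*k+1)) * h2
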